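/- Let $f_1,f_2,g_1,g_2\in C(\partial\Omega)$ with $f_1\le f_2$ and $g_1\le g_2$ $\mathcal{H}$-a.e., and $\psi_1\le\psi_2$, $\varphi_1\le\varphi_2$ in $C(\overline\Omega)$ with $\mathcal{K}_1(\Omega):=\mathcal{K}_{\psi_1,\varphi_1,f_1,g_1}(\Omega)\ne\varnothing$ and $\mathcal{K}_2(\Omega):=\mathcal{K}_{\psi_2,\varphi_2,f_2,g_2}(\Omega)\ne\varnothing$. If $u_1$ is the minimal strong solution to the $\mathcal{K}_1$-obstacle problem and $u_2$ is any strong solution to the $\mathcal{K}_2$-obstacle problem, then $u_1\le u_2$ $\mu$-a.e. in $\Omega$. -/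

import Mathlib

open MeasureTheory Filter Set Topology
open scoped ENNReal NNReal

section Prelude

variable {X : Type*} [MetricSpace X] [MeasurableSpace X]

/-- Pointwise (upper) local Lipschitz constant of a real valued function. -/
noncomputable def lipConst (u : X → ℝ) (x : X) : ℝ≥0∞ :=
  Filter.limsup
    (fun r : ℝ => ⨆ y ∈ Metric.ball x r, ENNReal.ofReal (|u y - u x| / r))
    (nhdsWithin (0:ℝ) (Set.Ioi 0))

/-- Total variation of `u` on `U`, defined by relaxation of the integral of the local
Lipschitz constant along locally Lipschitz approximations converging in `L¹_loc(U)`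
(the metric-measure-space BV energy of Miranda). -/
noncomputable def TV (μ : Measure X) (u : X → ℝ) (U : Set X) : ℝ≥0∞ :=
  ⨅ (v : ℕ → X → ℝ) (_ : (∀ n, LocallyLipschitz (v n)) ∧
      ∀ K : Set X, K ⊆ U → IsCompact K →
        Filter.Tendsto (fun n => ∫ x in K, |v n x - u x| ∂μ) Filter.atTop (nhds (0:ℝ))),
    Filter.liminf (fun n => ∫⁻ x in U, lipConst (v n) x ∂μ) Filter.atTop

/-- Perimeter of a set `E` in `U`. -/
noncomputable def perim (μ : Measure X) (E U : Set X) : ℝ≥0∞ :=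
  TV μ (E.indicator fun _ => (1:ℝ)) U

/-- `u` has trace `t` at the boundary point `z` of `Ω`. -/
def HasTraceAt (μ : Measure X) (Ω : Set X) (u : X → ℝ) (z : X) (t : ℝ) : Prop :=
  Filter.Tendsto (fun r : ℝ => ⨍ y in Metric.ball z r ∩ Ω, |u y - t| ∂μ)
    (nhdsWithin (0:ℝ) (Set.Ioi 0)) (nhds (0:ℝ))

/-- Codimension-one Hausdorff premeasure at scale `δ` (covers by balls of radius `< δ`). -/
noncomputable def codimOneContent (μ : Measure X) (δ : ℝ) (E : Set X) : ℝ≥0∞ :=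
  ⨅ (c : ℕ → X × ℝ) (_ : (∀ i, 0 < (c i).2 ∧ (c i).2 < δ) ∧
      E ⊆ ⋃ i, Metric.ball (c i).1 (c i).2),
    ∑' i, μ (Metric.ball (c i).1 (c i).2) / ENNReal.ofReal (c i).2

/-- Codimension-one Hausdorff measure (as a set function). -/
noncomputable def codimOneHausdorff (μ : Measure X) (E : Set X) : ℝ≥0∞ :=
  ⨆ (δ : ℝ) (_ : (0:ℝ) < δ), codimOneContent μ δ E

/-- `μ` is a (globally) doubling measure: `0 < μ(B(x,2r)) ≤ C μ(B(x,r)) < ∞`. -/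
def IsDoubling (μ : Measure X) : Prop :=
  ∃ C : ℝ≥0∞, 1 ≤ C ∧ ∀ (x : X) (r : ℝ), 0 < r →
    0 < μ (Metric.ball x (2*r)) ∧ μ (Metric.ball x (2*r)) ≤ C * μ (Metric.ball x r) ∧
      C * μ (Metric.ball x r) < ⊤

/-- `H|∂Ω` is lower codimension-1 Ahlfors regular. -/
def LowerCodimOneAR (μ H : Measure X) (Ω : Set X) : Prop :=
  ∃ C : ℝ≥0∞, 0 < C ∧ ∀ x ∈ frontier Ω, ∀ r : ℝ, 0 < r →
    r < 2 * Metric.diam (frontier Ω) →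
    C * (μ (Metric.ball x r) / ENNReal.ofReal r) ≤ H (Metric.ball x r ∩ frontier Ω)

/-- `H|∂Ω` is doubling. -/
def BoundaryDoubling (H : Measure X) (Ω : Set X) : Prop :=
  ∃ C : ℝ≥0∞, 1 ≤ C ∧ ∀ x ∈ frontier Ω, ∀ r : ℝ, 0 < r →
    H (Metric.ball x (2*r) ∩ frontier Ω) ≤ C * H (Metric.ball x r ∩ frontier Ω)

/-- `Ω` is an `A`-uniform domain. -/
def IsUniformDomain (Ω : Set X) (A : ℝ) : Prop :=
  1 ≤ A ∧ ∀ x ∈ Ω, ∀ y ∈ Ω, ∃ γ : ℝ → X, ContinuousOn γ (Set.Icc 0 1) ∧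
    γ 0 = x ∧ γ 1 = y ∧ (∀ t ∈ Set.Icc (0:ℝ) 1, γ t ∈ Ω) ∧
    eVariationOn γ (Set.Icc 0 1) ≤ ENNReal.ofReal (A * dist x y) ∧
    ∀ t ∈ Set.Icc (0:ℝ) 1,
      min (eVariationOn γ (Set.Icc 0 t)) (eVariationOn γ (Set.Icc t 1)) ≤
        ENNReal.ofReal (A * Metric.infDist (γ t) Ωᶜ)

/-- `E` is a weak solution set to the Dirichlet problem in `Ω` with boundary data `χ_F`. -/
def IsWeakSolSet (μ : Measure X) (Ω F E : Set X) : Prop :=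
  (∀ x, x ∉ Ω → (x ∈ E ↔ x ∈ F)) ∧
  ∀ E' : Set X, (∀ x, x ∉ Ω → (x ∈ E' ↔ x ∈ F)) →
    perim μ E (closure Ω) ≤ perim μ E' (closure Ω)

/-- Minimal weak solution set for boundary data `χ_F`. -/
def IsMinimalWeakSolSet (μ : Measure X) (Ω F E : Set X) : Prop :=
  IsWeakSolSet μ Ω F E ∧ ∀ E', IsWeakSolSet μ Ω F E' → μ (E \ E') = 0

/-- `∂Ω` has positive mean curvature (Lahti–Malý–Shanmugalingam–Speight). -/
def PosMeanCurvature (μ : Measure X) (Ω : Set X) : Prop :=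
  ∀ x ∈ frontier Ω, ∃ (φ : ℝ → ℝ) (rx : ℝ), 0 < rx ∧
    (∀ r, 0 < r → 0 < φ r) ∧ (∀ r s, 0 < r → r ≤ s → φ r ≤ φ s) ∧
    ∀ r : ℝ, 0 < r → r < rx → perim μ (Metric.ball x r) Set.univ < ⊤ →
      ∀ E : Set X, IsMinimalWeakSolSet μ Ω (Metric.ball x r) E →
        μ (Metric.ball x (φ r) \ E) = 0

/-- Membership in the class `𝒦_{ψ₁,ψ₂,f,g}(Ω)`. -/
def memK (μ H : Measure X) (Ω : Set X) (ψ₁ ψ₂ : X → EReal) (f g : X → ℝ)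
    (u : X → ℝ) : Prop :=
  MeasureTheory.IntegrableOn u Ω μ ∧ TV μ u Ω < ⊤ ∧
  (∀ᵐ x ∂μ.restrict Ω, ψ₁ x ≤ (u x : EReal) ∧ (u x : EReal) ≤ ψ₂ x) ∧
  (∀ᵐ z ∂H.restrict (frontier Ω), ∃ t : ℝ, HasTraceAt μ Ω u z t ∧ f z ≤ t ∧ t ≤ g z)

/-- Strong solution to the `𝒦_{ψ₁,ψ₂,f,g}`-obstacle problem. -/
def IsStrongSolution (μ H : Measure X) (Ω : Set X) (ψ₁ ψ₂ : X → EReal) (f g : X → ℝ)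
    (u : X → ℝ) : Prop :=
  memK μ H Ω ψ₁ ψ₂ f g u ∧ ∀ v, memK μ H Ω ψ₁ ψ₂ f g v → TV μ u Ω ≤ TV μ v Ω

/-- Minimal strong solution to the `𝒦_{ψ₁,ψ₂,f,g}`-obstacle problem. -/
def IsMinimalStrongSolution (μ H : Measure X) (Ω : Set X) (ψ₁ ψ₂ : X → EReal)
    (f g : X → ℝ) (u : X → ℝ) : Prop :=
  IsStrongSolution μ H Ω ψ₁ ψ₂ f g u ∧
  ∀ v, IsStrongSolution μ H Ω ψ₁ ψ₂ f g v → ∀ᵐ x ∂μ.restrict Ω, u x ≤ v x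

/-- Maximal strong solution to the `𝒦_{ψ₁,ψ₂,f,g}`-obstacle problem. -/
def IsMaximalStrongSolution (μ H : Measure X) (Ω : Set X) (ψ₁ ψ₂ : X → EReal)
    (f g : X → ℝ) (u : X → ℝ) : Prop :=
  IsStrongSolution μ H Ω ψ₁ ψ₂ f g u ∧
  ∀ v, IsStrongSolution μ H Ω ψ₁ ψ₂ f g v → ∀ᵐ x ∂μ.restrict Ω, v x ≤ u x

/-- Characteristic function of a set, viewed as an `EReal`-valued obstacle. -/
noncomputable def setObstacle (A : Set X) : X → EReal :=
  fun x => ((A.indicator (fun _ => (1:ℝ)) x : ℝ) : EReal)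

/-- Membership in the class `𝒦_{A,B,F,G}(Ω)` (characteristic-function data). -/
def memKSet (μ H : Measure X) (Ω A B F G : Set X) (u : X → ℝ) : Prop :=
  memK μ H Ω (setObstacle A) (setObstacle B)
    (F.indicator fun _ => (1:ℝ)) (G.indicator fun _ => (1:ℝ)) u

/-- `E` is a strong solution set to the `𝒦_{A,B,F,G}`-obstacle problem. -/
def IsStrongSolutionSet (μ H : Measure X) (Ω A B F G : Set X) (E : Set X) : Prop :=
  memKSet μ H Ω A B F G (E.indicator fun _ => (1:ℝ)) ∧
  ∀ v, memKSet μ H Ω A B F G v →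
    TV μ (E.indicator fun _ => (1:ℝ)) Ω ≤ TV μ v Ω

/-- `E` is the minimal strong solution set to the `𝒦_{A,B,F,G}`-obstacle problem. -/
def IsMinimalStrongSolutionSet (μ H : Measure X) (Ω A B F G : Set X) (E : Set X) : Prop :=
  IsStrongSolutionSet μ H Ω A B F G E ∧
  ∀ E', IsStrongSolutionSet μ H Ω A B F G E' → μ (E \ E') = 0

/-- Membership in `𝒦̃_{A,B,F,G}(Ω)`: pointwise everywhere obstacle and boundary
constraints, for characteristic-function data. -/
def memKt (Ω A B F G : Set X) (u : X → ℝ) : Prop :=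
  (∀ x ∈ Ω, A.indicator (fun _ => (1:ℝ)) x ≤ u x ∧ u x ≤ B.indicator (fun _ => (1:ℝ)) x) ∧
  (∀ x ∉ Ω, F.indicator (fun _ => (1:ℝ)) x ≤ u x ∧ u x ≤ G.indicator (fun _ => (1:ℝ)) x)

/-- `u` is an `ε`-weak solution to the `𝒦_{A,B,F,G}`-obstacle problem. -/
def IsEpsWeakSolution (μ : Measure X) (Ω A B F G : Set X) (ε : ℝ) (u : X → ℝ) : Prop :=
  memKt Ω A B F G u ∧ MeasureTheory.LocallyIntegrable u μ ∧
  ∀ v, memKt Ω A B F G v → MeasureTheory.LocallyIntegrable v μ →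
    TV μ u (Metric.thickening ε Ω) ≤ TV μ v (Metric.thickening ε Ω)

/-- Membership in the Dirichlet class with boundary data `h`. -/
def memD (μ H : Measure X) (Ω : Set X) (h : X → ℝ) (u : X → ℝ) : Prop :=
  MeasureTheory.IntegrableOn u Ω μ ∧ TV μ u Ω < ⊤ ∧
  ∀ᵐ z ∂H.restrict (frontier Ω), HasTraceAt μ Ω u z (h z)

/-- Strong solution to the Dirichlet problem for least gradients with data `h`. -/
def IsDirichletStrongSolution (μ H : Measure X) (Ω : Set X) (h : X → ℝ)
    (u : X → ℝ) : Prop :=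
  memD μ H Ω h u ∧ ∀ v, memD μ H Ω h v → TV μ u Ω ≤ TV μ v Ω

end Prelude

section Aux

set_option linter.unusedSectionVars false

open Metric

theorem ennreal_liminf_add_liminf_le {c d : ℕ → ℝ≥0∞} :
    (Filter.liminf c Filter.atTop) + Filter.liminf d Filter.atTop ≤
      Filter.liminf (fun n => c n + d n) Filter.atTop := by
  rw [Filter.liminf_eq_iSup_iInf_of_nat, Filter.liminf_eq_iSup_iInf_of_nat,
    Filter.liminf_eq_iSup_iInf_of_nat]
  refine ENNReal.iSup_add_iSup_le fun n m => ?_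
  refine le_trans ?_ (le_iSup (fun k => ⨅ i ≥ k, (c i + d i)) (max n m))
  refine le_iInf₂ fun i hi => ?_
  exact add_le_add (iInf₂_le i (le_trans (le_max_left n m) hi))
    (iInf₂_le i (le_trans (le_max_right n m) hi))

variable {X : Type*} [MetricSpace X] [MeasurableSpace X] [BorelSpace X]

theorem lipConst_congr_of_eqOn {V : Set X} (hV : IsOpen V) {f g : X → ℝ}
    (h : ∀ y ∈ V, f y = g y) {x : X} (hx : x ∈ V) : lipConst f x = lipConst g x := by
  obtain ⟨r₀, hr₀, hball⟩ := Metric.isOpen_iff.1 hV x hx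
  refine Filter.limsup_congr ?_
  filter_upwards [Ioo_mem_nhdsGT_of_mem (Set.left_mem_Ico.2 hr₀)] with r hr
  refine iSup_congr fun y => iSup_congr fun hy => ?_
  have hyV : y ∈ V := hball (Metric.ball_subset_ball hr.2.le hy)
  rw [h y hyV, h x hx]

theorem lipConst_add_const (f : X → ℝ) (c : ℝ) :
    lipConst (fun y => f y + c) = lipConst f := by
  funext x; unfold lipConst; simp only [add_sub_add_right_eq_sub]

theorem LocallyLipschitz.add_const' {f : X → ℝ} (hf : LocallyLipschitz f) (c : ℝ) :
    LocallyLipschitz (fun x => f x + c) := by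
  intro x
  obtain ⟨K, t, ht, hK⟩ := hf x
  exact ⟨K, t, ht, fun y hy z hz => by simpa [edist_add_right] using hK hy hz⟩

theorem lip_submodular (μ : Measure X) {Ω : Set X} (hΩo : IsOpen Ω) {v w : X → ℝ}
    (hv : Continuous v) (hw : Continuous w)
    (hnull : μ (Ω ∩ {x | v x = w x}) = 0) :
    (∫⁻ x in Ω, lipConst (fun y => min (v y) (w y)) x ∂μ) +
      ∫⁻ x in Ω, lipConst (fun y => max (v y) (w y)) x ∂μ ≤
    (∫⁻ x in Ω, lipConst v x ∂μ) + ∫⁻ x in Ω, lipConst w x ∂μ := by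
  set A := Ω ∩ {x | v x < w x} with hA'
  set B := Ω ∩ {x | w x < v x} with hB'
  have hA : IsOpen A := hΩo.inter (isOpen_lt hv hw)
  have hB : IsOpen B := hΩo.inter (isOpen_lt hw hv)
  have hsub : Ω ⊆ A ∪ B ∪ (Ω ∩ {x | v x = w x}) := by
    intro x hx; rcases lt_trichotomy (v x) (w x) with h|h|h
    · exact Or.inl (Or.inl ⟨hx, h⟩)
    · exact Or.inr ⟨hx, h⟩
    · exact Or.inl (Or.inr ⟨hx, h⟩)
  have key : ∀ f : X → ℝ≥0∞, (∫⁻ x in Ω, f x ∂μ) ≤ (∫⁻ x in A, f x ∂μ) + ∫⁻ x in B, f x ∂μ := by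
    intro f
    calc ∫⁻ x in Ω, f x ∂μ ≤ ∫⁻ x in A ∪ B ∪ (Ω ∩ {x | v x = w x}), f x ∂μ :=
          lintegral_mono_set hsub
      _ ≤ (∫⁻ x in A ∪ B, f x ∂μ) + ∫⁻ x in Ω ∩ {x | v x = w x}, f x ∂μ :=
          lintegral_union_le _ _ _
      _ ≤ ((∫⁻ x in A, f x ∂μ) + ∫⁻ x in B, f x ∂μ) + 0 := by
          gcongr
          · exact lintegral_union_le _ _ _
          · rw [Measure.restrict_eq_zero.2 hnull, lintegral_zero_measure]
      _ = _ := add_zero _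
  have key2 : ∀ f : X → ℝ≥0∞, (∫⁻ x in A, f x ∂μ) + (∫⁻ x in B, f x ∂μ) ≤ ∫⁻ x in Ω, f x ∂μ := by
    intro f
    have hdisj : Disjoint A B :=
      Set.disjoint_left.2 fun x hxA hxB => absurd (hxA.2.trans hxB.2) (lt_irrefl (v x))
    rw [← lintegral_union hB.measurableSet hdisj]
    exact lintegral_mono_set (Set.union_subset Set.inter_subset_left Set.inter_subset_left)
  have congrA_min : ∫⁻ x in A, lipConst (fun y => min (v y) (w y)) x ∂μ
      = ∫⁻ x in A, lipConst v x ∂μ :=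
    lintegral_congr_ae ((ae_restrict_iff' hA.measurableSet).2 (Filter.Eventually.of_forall
      fun x hx => lipConst_congr_of_eqOn hA (fun y hy => min_eq_left hy.2.le) hx))
  have congrA_max : ∫⁻ x in A, lipConst (fun y => max (v y) (w y)) x ∂μ
      = ∫⁻ x in A, lipConst w x ∂μ :=
    lintegral_congr_ae ((ae_restrict_iff' hA.measurableSet).2 (Filter.Eventually.of_forall
      fun x hx => lipConst_congr_of_eqOn hA (fun y hy => max_eq_right hy.2.le) hx))
  have congrB_min : ∫⁻ x in B, lipConst (fun y => min (v y) (w y)) x ∂μ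
      = ∫⁻ x in B, lipConst w x ∂μ :=
    lintegral_congr_ae ((ae_restrict_iff' hB.measurableSet).2 (Filter.Eventually.of_forall
      fun x hx => lipConst_congr_of_eqOn hB (fun y hy => min_eq_right hy.2.le) hx))
  have congrB_max : ∫⁻ x in B, lipConst (fun y => max (v y) (w y)) x ∂μ
      = ∫⁻ x in B, lipConst v x ∂μ :=
    lintegral_congr_ae ((ae_restrict_iff' hB.measurableSet).2 (Filter.Eventually.of_forall
      fun x hx => lipConst_congr_of_eqOn hB (fun y hy => max_eq_left hy.2.le) hx))
  calc (∫⁻ x in Ω, lipConst (fun y => min (v y) (w y)) x ∂μ) +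
        ∫⁻ x in Ω, lipConst (fun y => max (v y) (w y)) x ∂μ
      ≤ ((∫⁻ x in A, lipConst v x ∂μ) + ∫⁻ x in B, lipConst w x ∂μ) +
        ((∫⁻ x in A, lipConst w x ∂μ) + ∫⁻ x in B, lipConst v x ∂μ) := by
        rw [← congrA_min, ← congrB_min, ← congrA_max, ← congrB_max]
        exact add_le_add (key _) (key _)
    _ = ((∫⁻ x in A, lipConst v x ∂μ) + ∫⁻ x in B, lipConst v x ∂μ) +
        ((∫⁻ x in A, lipConst w x ∂μ) + ∫⁻ x in B, lipConst w x ∂μ) := by ring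
    _ ≤ _ := add_le_add (key2 _) (key2 _)

theorem integral_min_diff_le {μ : Measure X} {K : Set X} {a b c d : X → ℝ}
    (ha : MeasureTheory.IntegrableOn a K μ) (hb : MeasureTheory.IntegrableOn b K μ)
    (hc : MeasureTheory.IntegrableOn c K μ) (hd : MeasureTheory.IntegrableOn d K μ) :
    ∫ x in K, |min (a x) (b x) - min (c x) (d x)| ∂μ ≤
      (∫ x in K, |a x - c x| ∂μ) + ∫ x in K, |b x - d x| ∂μ := by
  have hmin1 : MeasureTheory.IntegrableOn (fun x => min (a x) (b x)) K μ := by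
    have := ha.inf hb; exact this
  have hmin2 : MeasureTheory.IntegrableOn (fun x => min (c x) (d x)) K μ := by
    have := hc.inf hd; exact this
  have h1 : MeasureTheory.IntegrableOn (fun x => |min (a x) (b x) - min (c x) (d x)|) K μ :=
    (hmin1.sub hmin2).abs
  have h2 : MeasureTheory.IntegrableOn (fun x => |a x - c x|) K μ := (ha.sub hc).abs
  have h3 : MeasureTheory.IntegrableOn (fun x => |b x - d x|) K μ := (hb.sub hd).abs
  calc ∫ x in K, |min (a x) (b x) - min (c x) (d x)| ∂μ
      ≤ ∫ x in K, (|a x - c x| + |b x - d x|) ∂μ := by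
        refine integral_mono h1 (h2.add h3) fun x => ?_
        exact (abs_min_sub_min_le_max _ _ _ _).trans
          (max_le_add_of_nonneg (abs_nonneg _) (abs_nonneg _))
    _ = _ := integral_add h2 h3

theorem integral_max_diff_le {μ : Measure X} {K : Set X} {a b c d : X → ℝ}
    (ha : MeasureTheory.IntegrableOn a K μ) (hb : MeasureTheory.IntegrableOn b K μ)
    (hc : MeasureTheory.IntegrableOn c K μ) (hd : MeasureTheory.IntegrableOn d K μ) :
    ∫ x in K, |max (a x) (b x) - max (c x) (d x)| ∂μ ≤
      (∫ x in K, |a x - c x| ∂μ) + ∫ x in K, |b x - d x| ∂μ := by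
  have hmax1 : MeasureTheory.IntegrableOn (fun x => max (a x) (b x)) K μ := by
    have := ha.sup hb; exact this
  have hmax2 : MeasureTheory.IntegrableOn (fun x => max (c x) (d x)) K μ := by
    have := hc.sup hd; exact this
  have h1 : MeasureTheory.IntegrableOn (fun x => |max (a x) (b x) - max (c x) (d x)|) K μ :=
    (hmax1.sub hmax2).abs
  have h2 : MeasureTheory.IntegrableOn (fun x => |a x - c x|) K μ := (ha.sub hc).abs
  have h3 : MeasureTheory.IntegrableOn (fun x => |b x - d x|) K μ := (hb.sub hd).abs
  calc ∫ x in K, |max (a x) (b x) - max (c x) (d x)| ∂μ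
      ≤ ∫ x in K, (|a x - c x| + |b x - d x|) ∂μ := by
        refine integral_mono h1 (h2.add h3) fun x => ?_
        exact (abs_max_sub_max_le_max _ _ _ _).trans
          (max_le_add_of_nonneg (abs_nonneg _) (abs_nonneg _))
    _ = _ := integral_add h2 h3

theorem setAverage_abs_nonneg (μ : Measure X) (s : Set X) (f : X → ℝ) :
    0 ≤ ⨍ y in s, |f y| ∂μ := by
  rw [setAverage_eq, smul_eq_mul]
  exact mul_nonneg (by positivity) (integral_nonneg fun y => abs_nonneg _)

theorem hasTraceAt_add_const {μ : Measure X} {Ω : Set X} {u : X → ℝ} {z : X} {t : ℝ}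
    (h : HasTraceAt μ Ω u z t) (c : ℝ) :
    HasTraceAt μ Ω (fun x => u x + c) z (t + c) := by
  unfold HasTraceAt at *
  simpa only [add_sub_add_right_eq_sub] using h

theorem hasTraceAt_min {μ : Measure X} {Ω : Set X} {u v : X → ℝ} {z : X} {t s : ℝ}
    (hΩfin : μ Ω ≠ ⊤)
    (hu : MeasureTheory.IntegrableOn u Ω μ) (hv : MeasureTheory.IntegrableOn v Ω μ)
    (hut : HasTraceAt μ Ω u z t) (hvs : HasTraceAt μ Ω v z s) :
    HasTraceAt μ Ω (fun x => min (u x) (v x)) z (min t s) := by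
  unfold HasTraceAt at *
  have key : ∀ r : ℝ, ⨍ y in Metric.ball z r ∩ Ω, |min (u y) (v y) - min t s| ∂μ ≤
      (⨍ y in Metric.ball z r ∩ Ω, |u y - t| ∂μ) + ⨍ y in Metric.ball z r ∩ Ω, |v y - s| ∂μ := by
    intro r
    set K := Metric.ball z r ∩ Ω
    have hKfin : μ K ≠ ⊤ := ((measure_mono Set.inter_subset_right).trans_lt
      (lt_top_iff_ne_top.2 hΩfin)).ne
    have hcK : ∀ c : ℝ, MeasureTheory.IntegrableOn (fun _ => c) K μ :=
      fun c => integrableOn_const hKfin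
    have hbound := integral_min_diff_le (μ := μ) (K := K)
      (hu.mono_set Set.inter_subset_right) (hv.mono_set Set.inter_subset_right)
      (hcK t) (hcK s)
    rw [setAverage_eq, setAverage_eq, setAverage_eq, smul_eq_mul, smul_eq_mul, smul_eq_mul,
      ← mul_add]
    exact mul_le_mul_of_nonneg_left hbound (by positivity)
  refine squeeze_zero' (Filter.Eventually.of_forall fun r => setAverage_abs_nonneg μ _ _)
    (Filter.Eventually.of_forall key) ?_
  simpa using hut.add hvs

theorem hasTraceAt_max {μ : Measure X} {Ω : Set X} {u v : X → ℝ} {z : X} {t s : ℝ}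
    (hΩfin : μ Ω ≠ ⊤)
    (hu : MeasureTheory.IntegrableOn u Ω μ) (hv : MeasureTheory.IntegrableOn v Ω μ)
    (hut : HasTraceAt μ Ω u z t) (hvs : HasTraceAt μ Ω v z s) :
    HasTraceAt μ Ω (fun x => max (u x) (v x)) z (max t s) := by
  unfold HasTraceAt at *
  have key : ∀ r : ℝ, ⨍ y in Metric.ball z r ∩ Ω, |max (u y) (v y) - max t s| ∂μ ≤
      (⨍ y in Metric.ball z r ∩ Ω, |u y - t| ∂μ) + ⨍ y in Metric.ball z r ∩ Ω, |v y - s| ∂μ := by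
    intro r
    set K := Metric.ball z r ∩ Ω
    have hKfin : μ K ≠ ⊤ := ((measure_mono Set.inter_subset_right).trans_lt
      (lt_top_iff_ne_top.2 hΩfin)).ne
    have hcK : ∀ c : ℝ, MeasureTheory.IntegrableOn (fun _ => c) K μ :=
      fun c => integrableOn_const hKfin
    have hbound := integral_max_diff_le (μ := μ) (K := K)
      (hu.mono_set Set.inter_subset_right) (hv.mono_set Set.inter_subset_right)
      (hcK t) (hcK s)
    rw [setAverage_eq, setAverage_eq, setAverage_eq, smul_eq_mul, smul_eq_mul, smul_eq_mul,
      ← mul_add]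
    exact mul_le_mul_of_nonneg_left hbound (by positivity)
  refine squeeze_zero' (Filter.Eventually.of_forall fun r => setAverage_abs_nonneg μ _ _)
    (Filter.Eventually.of_forall key) ?_
  simpa using hut.add hvs

theorem cont_integrableOn_compact {μ : Measure X} {K : Set X} (hKfin : μ K ≠ ⊤)
    (hKc : IsCompact K) {f : X → ℝ} (hf : Continuous f) :
    MeasureTheory.IntegrableOn f K μ := by
  obtain ⟨C, hC⟩ := hKc.exists_bound_of_continuousOn hf.continuousOn
  exact Measure.integrableOn_of_bounded hKfin hf.aestronglyMeasurable
    ((ae_restrict_iff' hKc.measurableSet).2 (Filter.Eventually.of_forall hC))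

theorem countable_bad (μ : Measure X) {Ω : Set X} (hΩmeas : MeasurableSet Ω) (hΩfin : μ Ω ≠ ⊤)
    {v w : ℕ → X → ℝ} (hv : ∀ n, Continuous (v n)) (hw : ∀ n, Continuous (w n)) :
    Set.Countable {ε : ℝ | ∃ n, 0 < μ (Ω ∩ {x | v n x - w n x = ε})} := by
  have heq : {ε : ℝ | ∃ n, 0 < μ (Ω ∩ {x | v n x - w n x = ε})}
      = ⋃ n, {ε : ℝ | 0 < μ (Ω ∩ {x | v n x - w n x = ε})} := by
    ext ε; simp [Set.mem_iUnion]
  rw [heq]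
  refine Set.countable_iUnion fun n => ?_
  refine MeasureTheory.Measure.countable_meas_pos_of_disjoint_of_meas_iUnion_ne_top μ
    (As := fun ε : ℝ => Ω ∩ {x | v n x - w n x = ε}) (fun ε => ?_) (fun ε ε' hne => ?_) ?_
  · show MeasurableSet (Ω ∩ {x | v n x - w n x = ε})
    have h2 : {x | v n x - w n x = ε} = (fun x => v n x - w n x) ⁻¹' {ε} := by ext x; simp
    rw [h2]
    exact hΩmeas.inter (((hv n).sub (hw n)).measurable (measurableSet_singleton ε))
  · show Disjoint (Ω ∩ {x | v n x - w n x = ε}) (Ω ∩ {x | v n x - w n x = ε'})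
    refine Set.disjoint_left.2 fun x hx hx' => hne ?_
    rw [← hx.2, ← hx'.2]
  · exact ((measure_mono (Set.iUnion_subset fun ε => Set.inter_subset_left)).trans_lt
      (lt_top_iff_ne_top.2 hΩfin)).ne

theorem TV_le_of_seq {μ : Measure X} {u : X → ℝ} {U : Set X} {v : ℕ → X → ℝ}
    (hv : (∀ n, LocallyLipschitz (v n)) ∧
      ∀ K : Set X, K ⊆ U → IsCompact K →
        Filter.Tendsto (fun n => ∫ x in K, |v n x - u x| ∂μ) Filter.atTop (nhds (0:ℝ))) :
    TV μ u U ≤ Filter.liminf (fun n => ∫⁻ x in U, lipConst (v n) x ∂μ) Filter.atTop :=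
  iInf₂_le v hv

theorem TV_add_const_le (μ : Measure X) (u : X → ℝ) (U : Set X) (c : ℝ) :
    TV μ (fun x => u x + c) U ≤ TV μ u U := by
  refine le_iInf₂ fun v hv => ?_
  have h1 : TV μ (fun x => u x + c) U ≤
      Filter.liminf (fun n => ∫⁻ x in U, lipConst (fun y => v n y + c) x ∂μ) Filter.atTop := by
    refine TV_le_of_seq ⟨fun n => (hv.1 n).add_const' c, fun K hKU hKc => ?_⟩
    simpa only [add_sub_add_right_eq_sub] using hv.2 K hKU hKc
  simpa only [lipConst_add_const] using h1

theorem TV_add_const (μ : Measure X) (u : X → ℝ) (U : Set X) (c : ℝ) :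
    TV μ (fun x => u x + c) U = TV μ u U := by
  refine le_antisymm (TV_add_const_le μ u U c) ?_
  have := TV_add_const_le μ (fun x => u x + c) U (-c)
  simpa only [add_neg_cancel_right] using this

theorem exists_seq_TV (μ : Measure X) (u : X → ℝ) (U : Set X) {δ : ℝ≥0∞} (hδ : δ ≠ 0)
    (hTV : TV μ u U ≠ ⊤) :
    ∃ v : ℕ → X → ℝ, (∀ n, LocallyLipschitz (v n)) ∧
      (∀ K : Set X, K ⊆ U → IsCompact K →
        Filter.Tendsto (fun n => ∫ x in K, |v n x - u x| ∂μ) Filter.atTop (nhds (0:ℝ))) ∧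
      ∀ n, ∫⁻ x in U, lipConst (v n) x ∂μ ≤ TV μ u U + δ := by
  have h1 : TV μ u U < TV μ u U + δ := ENNReal.lt_add_right hTV hδ
  conv_lhs at h1 => rw [TV]
  obtain ⟨v, h1⟩ := iInf_lt_iff.1 h1
  obtain ⟨hv, h1⟩ := iInf_lt_iff.1 h1
  have hfreq : ∃ᶠ n in Filter.atTop,
      (∫⁻ x in U, lipConst (v n) x ∂μ) < TV μ u U + δ :=
    Filter.frequently_lt_of_liminf_lt (by isBoundedDefault) h1
  obtain ⟨φ, hφmono, hφ⟩ := Filter.extraction_of_frequently_atTop hfreq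
  refine ⟨fun n => v (φ n), fun n => hv.1 (φ n), fun K hKU hKc => ?_, fun n => (hφ n).le⟩
  exact (hv.2 K hKU hKc).comp hφmono.tendsto_atTop

theorem TV_min_max (μ : Measure X) {Ω : Set X} (hΩo : IsOpen Ω) (hΩfin : μ Ω ≠ ⊤)
    {u₁ u₂ : X → ℝ} (hu₁i : MeasureTheory.IntegrableOn u₁ Ω μ)
    (hu₂i : MeasureTheory.IntegrableOn u₂ Ω μ)
    (hTV₁ : TV μ u₁ Ω ≠ ⊤) (hTV₂ : TV μ u₂ Ω ≠ ⊤) :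
    ∃ Bad : Set ℝ, Bad.Countable ∧ ∀ ε : ℝ, ε ∉ Bad →
      TV μ (fun x => min (u₁ x) (u₂ x + ε)) Ω + TV μ (fun x => max (u₁ x) (u₂ x + ε)) Ω ≤
        TV μ u₁ Ω + TV μ u₂ Ω := by
  have hδ : ∀ m : ℕ, ((m : ℝ≥0∞) + 1)⁻¹ ≠ 0 := fun m => by
    simp [ENNReal.inv_ne_zero]
  choose v hv1 hv2 hv3 using fun m : ℕ => exists_seq_TV μ u₁ Ω (hδ m) hTV₁
  choose w hw1 hw2 hw3 using fun m : ℕ => exists_seq_TV μ u₂ Ω (hδ m) hTV₂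
  refine ⟨⋃ m, {ε : ℝ | ∃ n, 0 < μ (Ω ∩ {x | v m n x - w m n x = ε})},
    Set.countable_iUnion fun m => countable_bad μ hΩo.measurableSet hΩfin
      (fun n => (hv1 m n).continuous) (fun n => (hw1 m n).continuous), fun ε hε => ?_⟩
  have hnull : ∀ m n, μ (Ω ∩ {x | v m n x = w m n x + ε}) = 0 := by
    intro m n
    have h1 : ¬ (0 < μ (Ω ∩ {x | v m n x - w m n x = ε})) := by
      intro h; exact hε (Set.mem_iUnion.2 ⟨m, ⟨n, h⟩⟩)
    have h2 : (Ω ∩ {x | v m n x = w m n x + ε}) = Ω ∩ {x | v m n x - w m n x = ε} := by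
      ext x; constructor <;> rintro ⟨hx, h⟩ <;> exact ⟨hx, by change _ = _ at h; change _ = _; linarith⟩
    rw [h2]
    exact le_zero_iff.1 (not_lt.1 h1)
  have hkey : ∀ m : ℕ,
      TV μ (fun x => min (u₁ x) (u₂ x + ε)) Ω + TV μ (fun x => max (u₁ x) (u₂ x + ε)) Ω ≤
      (TV μ u₁ Ω + TV μ u₂ Ω) + (((m : ℝ≥0∞) + 1)⁻¹ + ((m : ℝ≥0∞) + 1)⁻¹) := by
    intro m
    have hconv : ∀ K : Set X, K ⊆ Ω → IsCompact K →
        (Filter.Tendsto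
          (fun n => ∫ x in K, |min (v m n x) (w m n x + ε) - min (u₁ x) (u₂ x + ε)| ∂μ)
          Filter.atTop (nhds 0)) ∧
        (Filter.Tendsto
          (fun n => ∫ x in K, |max (v m n x) (w m n x + ε) - max (u₁ x) (u₂ x + ε)| ∂μ)
          Filter.atTop (nhds 0)) := by
      intro K hKU hKc
      have hKfin : μ K ≠ ⊤ :=
        ((measure_mono hKU).trans_lt (lt_top_iff_ne_top.2 hΩfin)).ne
      have hu₁K : MeasureTheory.IntegrableOn u₁ K μ := hu₁i.mono_set hKU
      have hu₂K : MeasureTheory.IntegrableOn (fun x => u₂ x + ε) K μ :=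
        (hu₂i.mono_set hKU).add (integrableOn_const hKfin)
      have hb : ∀ n, (∫ x in K, |min (v m n x) (w m n x + ε) - min (u₁ x) (u₂ x + ε)| ∂μ ≤
            (∫ x in K, |v m n x - u₁ x| ∂μ) + ∫ x in K, |w m n x - u₂ x| ∂μ) ∧
          (∫ x in K, |max (v m n x) (w m n x + ε) - max (u₁ x) (u₂ x + ε)| ∂μ ≤
            (∫ x in K, |v m n x - u₁ x| ∂μ) + ∫ x in K, |w m n x - u₂ x| ∂μ) := by
        intro n
        have hvK : MeasureTheory.IntegrableOn (v m n) K μ :=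
          cont_integrableOn_compact hKfin hKc (hv1 m n).continuous
        have hwK : MeasureTheory.IntegrableOn (fun x => w m n x + ε) K μ :=
          cont_integrableOn_compact hKfin hKc (((hw1 m n).add_const' ε).continuous)
        have e1 := integral_min_diff_le (μ := μ) (K := K) hvK hwK hu₁K hu₂K
        have e2 := integral_max_diff_le (μ := μ) (K := K) hvK hwK hu₁K hu₂K
        simp only [add_sub_add_right_eq_sub] at e1 e2
        exact ⟨e1, e2⟩
      have hlim : Filter.Tendsto
          (fun n => (∫ x in K, |v m n x - u₁ x| ∂μ) + ∫ x in K, |w m n x - u₂ x| ∂μ)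
          Filter.atTop (nhds 0) := by
        simpa using (hv2 m K hKU hKc).add (hw2 m K hKU hKc)
      exact ⟨squeeze_zero (fun n => integral_nonneg fun x => abs_nonneg _)
          (fun n => (hb n).1) hlim,
        squeeze_zero (fun n => integral_nonneg fun x => abs_nonneg _)
          (fun n => (hb n).2) hlim⟩
    have hminTV : TV μ (fun x => min (u₁ x) (u₂ x + ε)) Ω ≤
        Filter.liminf
          (fun n => ∫⁻ x in Ω, lipConst (fun y => min (v m n y) (w m n y + ε)) x ∂μ)
          Filter.atTop :=
      TV_le_of_seq ⟨fun n => (hv1 m n).min ((hw1 m n).add_const' ε),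
        fun K hKU hKc => (hconv K hKU hKc).1⟩
    have hmaxTV : TV μ (fun x => max (u₁ x) (u₂ x + ε)) Ω ≤
        Filter.liminf
          (fun n => ∫⁻ x in Ω, lipConst (fun y => max (v m n y) (w m n y + ε)) x ∂μ)
          Filter.atTop :=
      TV_le_of_seq ⟨fun n => (hv1 m n).max ((hw1 m n).add_const' ε),
        fun K hKU hKc => (hconv K hKU hKc).2⟩
    have hsum : ∀ n, (∫⁻ x in Ω, lipConst (fun y => min (v m n y) (w m n y + ε)) x ∂μ)
        + (∫⁻ x in Ω, lipConst (fun y => max (v m n y) (w m n y + ε)) x ∂μ) ≤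
        (TV μ u₁ Ω + TV μ u₂ Ω) + (((m : ℝ≥0∞) + 1)⁻¹ + ((m : ℝ≥0∞) + 1)⁻¹) := by
      intro n
      have h1 := lip_submodular μ hΩo (hv1 m n).continuous
        (((hw1 m n).add_const' ε).continuous) (hnull m n)
      have h2 : (∫⁻ x in Ω, lipConst (fun x => w m n x + ε) x ∂μ)
          = ∫⁻ x in Ω, lipConst (w m n) x ∂μ := by
        rw [lipConst_add_const]
      refine h1.trans ?_
      rw [h2]
      calc (∫⁻ x in Ω, lipConst (v m n) x ∂μ) + ∫⁻ x in Ω, lipConst (w m n) x ∂μ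
          ≤ (TV μ u₁ Ω + ((m : ℝ≥0∞) + 1)⁻¹) + (TV μ u₂ Ω + ((m : ℝ≥0∞) + 1)⁻¹) :=
            add_le_add (hv3 m n) (hw3 m n)
        _ = _ := by ring
    calc TV μ (fun x => min (u₁ x) (u₂ x + ε)) Ω + TV μ (fun x => max (u₁ x) (u₂ x + ε)) Ω
        ≤ Filter.liminf
            (fun n => ∫⁻ x in Ω, lipConst (fun y => min (v m n y) (w m n y + ε)) x ∂μ)
            Filter.atTop +
          Filter.liminf
            (fun n => ∫⁻ x in Ω, lipConst (fun y => max (v m n y) (w m n y + ε)) x ∂μ)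
            Filter.atTop := add_le_add hminTV hmaxTV
      _ ≤ Filter.liminf
            (fun n => (∫⁻ x in Ω, lipConst (fun y => min (v m n y) (w m n y + ε)) x ∂μ)
              + ∫⁻ x in Ω, lipConst (fun y => max (v m n y) (w m n y + ε)) x ∂μ)
            Filter.atTop := ennreal_liminf_add_liminf_le
      _ ≤ Filter.liminf
            (fun _ : ℕ => (TV μ u₁ Ω + TV μ u₂ Ω) + (((m : ℝ≥0∞) + 1)⁻¹ + ((m : ℝ≥0∞) + 1)⁻¹))
            Filter.atTop :=
          Filter.liminf_le_liminf (Filter.Eventually.of_forall hsum)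
      _ = _ := Filter.liminf_const _
  refine ENNReal.le_of_forall_pos_le_add fun η hη _ => ?_
  have hη2 : ((η : ℝ≥0∞) / 2) ≠ 0 := by
    simp [ENNReal.div_eq_zero_iff, hη.ne']
  obtain ⟨n, hn⟩ := ENNReal.exists_inv_nat_lt hη2
  have hδn : ((n : ℝ≥0∞) + 1)⁻¹ ≤ (η : ℝ≥0∞) / 2 :=
    le_of_lt (lt_of_le_of_lt (ENNReal.inv_le_inv' (le_add_of_nonneg_right zero_le_one)) hn)
  refine (hkey n).trans ?_
  calc (TV μ u₁ Ω + TV μ u₂ Ω) + (((n : ℝ≥0∞) + 1)⁻¹ + ((n : ℝ≥0∞) + 1)⁻¹)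
      ≤ (TV μ u₁ Ω + TV μ u₂ Ω) + ((η : ℝ≥0∞) / 2 + (η : ℝ≥0∞) / 2) := by gcongr
    _ = (TV μ u₁ Ω + TV μ u₂ Ω) + η := by rw [ENNReal.add_halves]

end Aux


/-- comparison: the minimal strong solution for the smaller data lies
below any strong solution for the larger data. -/
theorem comparison_minimal_strong_solutions {X : Type*} [MetricSpace X] [MeasurableSpace X]
    [BorelSpace X] [CompleteSpace X] (μ H : Measure X)
    (hμ : IsDoubling μ)
    (hH : ∀ s : Set X, H s = codimOneHausdorff μ s)
    (Ω : Set X) (hΩo : IsOpen Ω) (hΩc : IsConnected Ω) (hΩb : Bornology.IsBounded Ω)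
    (hΩm : μ Ωᶜ ≠ 0)
    (hHfin : H (frontier Ω) < ⊤)
    (hHdbl : BoundaryDoubling H Ω)
    (hAR : LowerCodimOneAR μ H Ω)
    (hpts : ∀ z ∈ frontier Ω, H {z} = 0)
    (hunif : ∃ A : ℝ, IsUniformDomain Ω A)
    (hpmc : PosMeanCurvature μ Ω)
    (ψ₁ ψ₂ φ₁ φ₂ : X → EReal)
    (hψ₁ : ContinuousOn ψ₁ (closure Ω)) (hψ₂ : ContinuousOn ψ₂ (closure Ω))
    (hφ₁ : ContinuousOn φ₁ (closure Ω)) (hφ₂ : ContinuousOn φ₂ (closure Ω))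
    (f₁ f₂ g₁ g₂ : X → ℝ)
    (hf₁ : ContinuousOn f₁ (frontier Ω)) (hf₂ : ContinuousOn f₂ (frontier Ω))
    (hg₁ : ContinuousOn g₁ (frontier Ω)) (hg₂ : ContinuousOn g₂ (frontier Ω))
    (hbd : ∀ᵐ z ∂H.restrict (frontier Ω), f₁ z ≤ f₂ z ∧ g₁ z ≤ g₂ z)
    (hobs : ∀ᵐ x ∂μ.restrict Ω, ψ₁ x ≤ ψ₂ x ∧ φ₁ x ≤ φ₂ x)
    (hne₁ : ∃ w, memK μ H Ω ψ₁ φ₁ f₁ g₁ w)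
    (hne₂ : ∃ w, memK μ H Ω ψ₂ φ₂ f₂ g₂ w)
    (u₁ u₂ : X → ℝ)
    (hu₁ : IsMinimalStrongSolution μ H Ω ψ₁ φ₁ f₁ g₁ u₁)
    (hu₂ : IsStrongSolution μ H Ω ψ₂ φ₂ f₂ g₂ u₂) :
    ∀ᵐ x ∂μ.restrict Ω, u₁ x ≤ u₂ x := by
  classical
  -- finiteness of μ on Ω
  obtain ⟨x₀, hx₀⟩ := hΩc.nonempty
  obtain ⟨C, hC1, hC⟩ := hμ
  obtain ⟨R, hR⟩ := hΩb.subset_closedBall x₀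
  have hΩfin : μ Ω ≠ ⊤ := by
    have h1 : Ω ⊆ Metric.ball x₀ (max R 0 + 1) := fun y hy =>
      Metric.mem_ball.2 (lt_of_le_of_lt ((Metric.mem_closedBall.1 (hR hy)).trans (le_max_left R 0))
        (lt_add_one _))
    have h2 := (hC x₀ (max R 0 + 1) (by positivity)).2.2
    have h3 : μ (Metric.ball x₀ (max R 0 + 1)) < ⊤ :=
      lt_of_le_of_lt (le_mul_of_one_le_left (by positivity) hC1) h2
    exact ((measure_mono h1).trans_lt h3).ne
  have mk₁ := hu₁.1.1
  have mk₂ := hu₂.1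
  have hint2 : ∀ ε : ℝ, MeasureTheory.IntegrableOn (fun x => u₂ x + ε) Ω μ := fun ε =>
    mk₂.1.add (integrableOn_const hΩfin)
  obtain ⟨Bad, hBadc, hBad⟩ := TV_min_max μ hΩo hΩfin mk₁.1 mk₂.1 mk₁.2.1.ne mk₂.2.1.ne
  -- the key step : comparison up to a good shift ε
  have key : ∀ ε : ℝ, 0 < ε → ε ∉ Bad → ∀ᵐ x ∂μ.restrict Ω, u₁ x ≤ u₂ x + ε := by
    intro ε hεpos hεBad
    have hsub := hBad ε hεBad
    have hab_fin : TV μ u₁ Ω + TV μ u₂ Ω < ⊤ := ENNReal.add_lt_top.2 ⟨mk₁.2.1, mk₂.2.1⟩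
    have hp_fin : TV μ (fun x => min (u₁ x) (u₂ x + ε)) Ω < ⊤ :=
      lt_of_le_of_lt (le_trans le_self_add hsub) hab_fin
    have hq_fin : TV μ (fun x => max (u₁ x) (u₂ x + ε)) Ω < ⊤ :=
      lt_of_le_of_lt (le_trans le_add_self hsub) hab_fin
    have hintmin : MeasureTheory.IntegrableOn (fun x => min (u₁ x) (u₂ x + ε)) Ω μ := by
      have := mk₁.1.inf (hint2 ε); exact this
    have hintmax : MeasureTheory.IntegrableOn (fun x => max (u₁ x) (u₂ x + ε)) Ω μ := by
      have := mk₁.1.sup (hint2 ε); exact this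
    have hM'TV : TV μ (fun x => max (u₁ x) (u₂ x + ε) + -ε) Ω
        = TV μ (fun x => max (u₁ x) (u₂ x + ε)) Ω :=
      TV_add_const μ (fun x => max (u₁ x) (u₂ x + ε)) Ω (-ε)
    -- membership of the min in 𝒦₁
    have memKmin : memK μ H Ω ψ₁ φ₁ f₁ g₁ (fun x => min (u₁ x) (u₂ x + ε)) := by
      refine ⟨hintmin, hp_fin, ?_, ?_⟩
      · filter_upwards [hobs, mk₁.2.2.1, mk₂.2.2.1] with x hx h1 h2
        obtain ⟨hψ, hφ⟩ := hx
        obtain ⟨h1l, h1u⟩ := h1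
        obtain ⟨h2l, h2u⟩ := h2
        constructor
        · rcases min_cases (u₁ x) (u₂ x + ε) with ⟨hmeq, _⟩ | ⟨hmeq, _⟩ <;> rw [hmeq]
          · exact h1l
          · exact (hψ.trans h2l).trans (EReal.coe_le_coe_iff.2 (by linarith))
        · exact (EReal.coe_le_coe_iff.2 (min_le_left _ _)).trans h1u
      · filter_upwards [mk₁.2.2.2, mk₂.2.2.2, hbd] with z h1 h2 h3
        obtain ⟨t₁, ht₁, hf₁t, hg₁t⟩ := h1
        obtain ⟨t₂, ht₂, hf₂t, hg₂t⟩ := h2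
        refine ⟨min t₁ (t₂ + ε),
          hasTraceAt_min hΩfin mk₁.1 (hint2 ε) ht₁ (hasTraceAt_add_const ht₂ ε),
          le_min hf₁t (h3.1.trans (hf₂t.trans (by linarith))), (min_le_left _ _).trans hg₁t⟩
    -- membership of the (shifted) max in 𝒦₂
    have memKmax : memK μ H Ω ψ₂ φ₂ f₂ g₂ (fun x => max (u₁ x) (u₂ x + ε) + -ε) := by
      refine ⟨hintmax.add (integrableOn_const hΩfin),
        hM'TV ▸ hq_fin, ?_, ?_⟩
      · filter_upwards [hobs, mk₁.2.2.1, mk₂.2.2.1] with x hx h1 h2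
        obtain ⟨hψ, hφ⟩ := hx
        obtain ⟨h1l, h1u⟩ := h1
        obtain ⟨h2l, h2u⟩ := h2
        constructor
        · refine h2l.trans (EReal.coe_le_coe_iff.2 ?_)
          have := le_max_right (u₁ x) (u₂ x + ε); linarith
        · rcases max_cases (u₁ x) (u₂ x + ε) with ⟨hmeq, _⟩ | ⟨hmeq, _⟩ <;> rw [hmeq]
          · exact ((EReal.coe_le_coe_iff.2 (by linarith : u₁ x + -ε ≤ u₁ x)).trans h1u).trans hφ
          · exact (EReal.coe_le_coe_iff.2 (by linarith : u₂ x + ε + -ε ≤ u₂ x)).trans h2u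
      · filter_upwards [mk₁.2.2.2, mk₂.2.2.2, hbd] with z h1 h2 h3
        obtain ⟨t₁, ht₁, hf₁t, hg₁t⟩ := h1
        obtain ⟨t₂, ht₂, hf₂t, hg₂t⟩ := h2
        refine ⟨max t₁ (t₂ + ε) + -ε,
          hasTraceAt_add_const
            (hasTraceAt_max hΩfin mk₁.1 (hint2 ε) ht₁ (hasTraceAt_add_const ht₂ ε)) (-ε),
          ?_, ?_⟩
        · have := le_max_right t₁ (t₂ + ε); linarith
        · rcases max_cases t₁ (t₂ + ε) with ⟨hmeq, _⟩ | ⟨hmeq, _⟩ <;> rw [hmeq]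
          · have := h3.2; linarith
          · linarith
    -- optimality comparisons
    have haq : TV μ u₂ Ω ≤ TV μ (fun x => max (u₁ x) (u₂ x + ε)) Ω :=
      hM'TV ▸ hu₂.2 _ memKmax
    have hap : TV μ u₁ Ω ≤ TV μ (fun x => min (u₁ x) (u₂ x + ε)) Ω := hu₁.1.2 _ memKmin
    have hpa : TV μ (fun x => min (u₁ x) (u₂ x + ε)) Ω = TV μ u₁ Ω := by
      refine le_antisymm ?_ hap
      refine (ENNReal.add_le_add_iff_right mk₂.2.1.ne).1 ?_
      exact le_trans (add_le_add_right haq _) hsub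
    -- the min is a strong solution of the 𝒦₁-problem
    have hstrong : IsStrongSolution μ H Ω ψ₁ φ₁ f₁ g₁ (fun x => min (u₁ x) (u₂ x + ε)) :=
      ⟨memKmin, fun v' hv' => hpa.le.trans (hu₁.1.2 v' hv')⟩
    filter_upwards [hu₁.2 _ hstrong] with x hx
    exact hx.trans (min_le_right _ _)
  -- choose a good sequence of shifts tending to zero
  have hgood : ∀ k : ℕ, ∃ ε : ℝ, ε ∈ Set.Ioo 0 (1 / ((k : ℝ) + 1)) ∧ ε ∉ Bad := by
    intro k
    by_contra hcon
    push_neg at hcon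
    have hk : (0 : ℝ) < 1 / ((k : ℝ) + 1) := by positivity
    have hsubset : Set.Ioo (0 : ℝ) (1 / ((k : ℝ) + 1)) ⊆ Bad := fun ε hε => hcon ε hε
    have h0 : (volume (Set.Ioo (0 : ℝ) (1 / ((k : ℝ) + 1)))) = 0 :=
      le_antisymm (le_trans (measure_mono hsubset) (hBadc.measure_zero volume).le) (by positivity)
    rw [Real.volume_Ioo] at h0
    simp only [sub_zero, ENNReal.ofReal_eq_zero] at h0
    linarith
  choose εs hεs hεsBad using hgood
  have hae : ∀ᵐ x ∂μ.restrict Ω, ∀ k : ℕ, u₁ x ≤ u₂ x + εs k :=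
    (MeasureTheory.ae_all_iff).2 fun k => key (εs k) (hεs k).1 (hεsBad k)
  filter_upwards [hae] with x hx
  by_contra hlt
  push_neg at hlt
  obtain ⟨k, hk⟩ := exists_nat_one_div_lt (sub_pos.2 hlt)
  have h1 := hx k
  have h2 := (hεs k).2
  linarith
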